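/- Let K be the fusion ring of a modular category C (commutative based ring with basis Irr(C)). Define a ℤ/2-graded ring D whose degree-0 part is K ⊗_ℤ K (with basis X⊠Y) and whose degree-1 part is the free ℤ-module on symbols V̂, V ∈ Irr(C), with multiplication determined by: (X⊠Y)(Z⊠W) as in K⊗K; (X⊠Y)·V̂ = V̂·(X⊠Y) = Σ_{U} N^U_{XYV} Û (i.e. the hat of the product XYV in K); and V̂·Ŵ = Σ_{X∈Irr(C)} (X V) ⊠ (X̄ W) (expanded in the basis of K⊗K). Then D is an associative unital ring. -/

import Mathlib

open scoped TensorProduct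

section Aux
variable {R : Type} [CommRing R] {B : Type} [Fintype B] [DecidableEq B]
  (b : Module.Basis B ℤ R) (one : B) (bar : B → B)

lemma aux_repr_one (hbar : ∀ X, bar (bar X) = X)
    (hdual : ∀ i j, b.repr (b i * b j) one = if j = bar i then 1 else 0)
    (p : R) (k : B) : b.repr (p * b (bar k)) one = b.repr p k := by
  conv_lhs => rw [← b.sum_repr p]
  rw [Finset.sum_mul, map_sum, Finsupp.coe_finset_sum, Finset.sum_apply]
  have h1 : ∀ i : B, b.repr ((b.repr p i • b i) * b (bar k)) one
      = if i = k then b.repr p i else 0 := by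
    intro i
    rw [smul_mul_assoc, map_smul, Finsupp.smul_apply, hdual i (bar k)]
    have h2 : (bar k = bar i) ↔ (i = k) := by
      constructor <;> intro h
      · have := congrArg bar h; rw [hbar, hbar] at this; exact this.symm
      · rw [h]
    simp only [smul_eq_mul, mul_ite, mul_one, mul_zero, h2]
  simp only [h1]
  simp [Finset.sum_ite_eq']

lemma aux_coeff_sym (hbar : ∀ X, bar (bar X) = X)
    (hdual : ∀ i j, b.repr (b i * b j) one = if j = bar i then 1 else 0)
    (j k X : B) : b.repr (b (bar k) * b j) X = b.repr (b (bar X) * b j) k := by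
  rw [← aux_repr_one b one bar hbar hdual (b (bar k) * b j) X,
      ← aux_repr_one b one bar hbar hdual (b (bar X) * b j) k]
  ring_nf

lemma aux_C_basis (hbar : ∀ X, bar (bar X) = X)
    (hdual : ∀ i j, b.repr (b i * b j) one = if j = bar i then 1 else 0)
    (j : B) :
    ∑ X : B, (b X * b j) ⊗ₜ[ℤ] (b (bar X) : R)
      = ∑ X : B, (b X : R) ⊗ₜ[ℤ] (b (bar X) * b j) := by
  have expandL : ∀ X : B, (b X * b j) ⊗ₜ[ℤ] (b (bar X) : R)
      = ∑ k : B, b.repr (b X * b j) k • ((b k : R) ⊗ₜ[ℤ] (b (bar X) : R)) := by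
    intro X
    conv_lhs => rw [← b.sum_repr (b X * b j)]
    rw [TensorProduct.sum_tmul]
    simp only [TensorProduct.smul_tmul']
  have expandR : ∀ X : B, (b X : R) ⊗ₜ[ℤ] (b (bar X) * b j)
      = ∑ k : B, b.repr (b (bar X) * b j) k • ((b X : R) ⊗ₜ[ℤ] (b k : R)) := by
    intro X
    conv_lhs => rw [← b.sum_repr (b (bar X) * b j)]
    rw [TensorProduct.tmul_sum]
    simp only [TensorProduct.tmul_smul]
  simp only [expandL, expandR]
  rw [show ∑ X : B, ∑ k : B, b.repr (b X * b j) k • ((b k : R) ⊗ₜ[ℤ] (b (bar X) : R))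
      = ∑ X : B, ∑ k : B, b.repr (b (bar X) * b j) k • ((b k : R) ⊗ₜ[ℤ] (b X : R)) from
    Fintype.sum_equiv (Function.Involutive.toPerm bar hbar) _ _ (by
      intro X
      show _ = ∑ k : B, b.repr (b (bar (bar X)) * b j) k • ((b k : R) ⊗ₜ[ℤ] (b (bar X) : R))
      rw [hbar])]
  rw [Finset.sum_comm]
  apply Finset.sum_congr rfl
  intro X _
  apply Finset.sum_congr rfl
  intro k _
  rw [aux_coeff_sym b one bar hbar hdual j k X]

end Aux

/-- The multiplication of the ℤ/2-graded extension ring `D = (K ⊗ K) × K`: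
degree-0 part `K ⊗ K` multiplies as the tensor-square of the fusion ring `K`;
the degree-1 part (spanned by hats `V̂`, identified with `K` itself) satisfies
`(X⊠Y)·V̂ = V̂·(X⊠Y) = hat(XYV)` and `V̂·Ŵ = Σ_X (XV) ⊠ (X̄W)`. -/
noncomputable def gmul {R : Type} [CommRing R] {B : Type} [Fintype B]
    (b : Module.Basis B ℤ R) (bar : B → B) :
    (R ⊗[ℤ] R) × R → (R ⊗[ℤ] R) × R → (R ⊗[ℤ] R) × R :=
  fun x y =>
    (x.1 * y.1 + ∑ X : B, (b X * x.2) ⊗ₜ[ℤ] (b (bar X) * y.2),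
     LinearMap.mul' ℤ R x.1 * y.2 + LinearMap.mul' ℤ R y.1 * x.2)

/-- The ℤ/2-graded extension `D` of the fusion ring `K ⊗ K` by the hats `V̂`
is an associative unital ring: `gmul` is associative, has `(1, 0)` as a
two-sided unit, and is bi-additive. -/
theorem gmul_ring {R : Type} [CommRing R] {B : Type} [Fintype B] [DecidableEq B]
    (b : Module.Basis B ℤ R) (one : B) (bar : B → B)
    (hone : b one = 1)
    (hbar : ∀ X, bar (bar X) = X)
    (hN : ∀ i j k, 0 ≤ b.repr (b i * b j) k)
    (hdual : ∀ i j, b.repr (b i * b j) one = if j = bar i then 1 else 0) :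
    (∀ x y z, gmul b bar (gmul b bar x y) z = gmul b bar x (gmul b bar y z)) ∧
    (∀ x, gmul b bar (1, 0) x = x ∧ gmul b bar x (1, 0) = x) ∧
    (∀ x y z, gmul b bar x (y + z) = gmul b bar x y + gmul b bar x z) ∧
    (∀ x y z, gmul b bar (x + y) z = gmul b bar x z + gmul b bar y z) := by
  set m := LinearMap.mul' ℤ R with hmdef
  set C : R ⊗[ℤ] R := ∑ X : B, (b X : R) ⊗ₜ[ℤ] (b (bar X) : R) with hCdef
  have hm : ∀ x y : R, m (x ⊗ₜ[ℤ] y) = x * y := fun x y => LinearMap.mul'_apply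
  have hmmul : ∀ p q : R ⊗[ℤ] R, m (p * q) = m p * m q := by
    have he : m = (Algebra.TensorProduct.lmul' ℤ (S := R)).toLinearMap :=
      (Algebra.TensorProduct.lmul'_toLinearMap).symm
    intro p q
    rw [he]
    exact map_mul (Algebra.TensorProduct.lmul' ℤ (S := R)) p q
  have hm1 : m 1 = 1 := by
    rw [Algebra.TensorProduct.one_def, hm, one_mul]
  -- the Casimir element absorbs multiplications into one leg
  have hCswap : ∀ r : R, C * (r ⊗ₜ[ℤ] (1 : R)) = C * ((1 : R) ⊗ₜ[ℤ] r) := by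
    have hbasis : ∀ j : B, C * ((b j : R) ⊗ₜ[ℤ] (1 : R)) = C * ((1 : R) ⊗ₜ[ℤ] (b j : R)) := by
      intro j
      rw [hCdef, Finset.sum_mul, Finset.sum_mul]
      simp only [Algebra.TensorProduct.tmul_mul_tmul, mul_one, one_mul]
      exact aux_C_basis b one bar hbar hdual j
    intro r
    conv_lhs => rw [← b.sum_repr r]
    conv_rhs => rw [← b.sum_repr r]
    rw [TensorProduct.sum_tmul, TensorProduct.tmul_sum, Finset.mul_sum, Finset.mul_sum]
    apply Finset.sum_congr rfl
    intro j _
    rw [← TensorProduct.smul_tmul', TensorProduct.tmul_smul, mul_smul_comm, mul_smul_comm,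
      hbasis j]
  have hC : ∀ e : R ⊗[ℤ] R, C * e = C * ((1 : R) ⊗ₜ[ℤ] m e) := by
    intro e
    induction e using TensorProduct.induction_on with
    | zero => simp
    | tmul x y =>
        have : (x ⊗ₜ[ℤ] y : R ⊗[ℤ] R) = (x ⊗ₜ[ℤ] (1 : R)) * ((1 : R) ⊗ₜ[ℤ] y) := by
          rw [Algebra.TensorProduct.tmul_mul_tmul, mul_one, one_mul]
        rw [this, ← mul_assoc, hCswap x, mul_assoc, Algebra.TensorProduct.tmul_mul_tmul,
          one_mul, hmmul, hm, hm, one_mul, mul_one]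
    | add p q hp hq =>
        rw [mul_add, hp, hq, map_add, TensorProduct.tmul_add, mul_add]
  -- the hat-hat sums are multiplication by C
  have Ssum : ∀ u v : R, (∑ X : B, (b X * u) ⊗ₜ[ℤ] (b (bar X) * v)) = C * (u ⊗ₜ[ℤ] v) := by
    intro u v
    rw [hCdef, Finset.sum_mul]
    apply Finset.sum_congr rfl
    intro X _
    rw [Algebra.TensorProduct.tmul_mul_tmul]
  have key0 : ∀ u v : R, C * (u ⊗ₜ[ℤ] v) = C * ((1 : R) ⊗ₜ[ℤ] (u * v)) := by
    intro u v
    rw [hC (u ⊗ₜ[ℤ] v), hm]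
  have key : ∀ (u v : R) (e : R ⊗[ℤ] R),
      C * (u ⊗ₜ[ℤ] v) * e = C * ((1 : R) ⊗ₜ[ℤ] (u * v * m e)) := by
    intro u v e
    rw [mul_assoc, hC ((u ⊗ₜ[ℤ] v) * e), hmmul, hm]
  have keyL : ∀ (u v : R) (e : R ⊗[ℤ] R),
      e * (C * (u ⊗ₜ[ℤ] v)) = C * ((1 : R) ⊗ₜ[ℤ] (u * v * m e)) := by
    intro u v e
    rw [mul_comm e, key]
  refine ⟨?_, ?_, ?_, ?_⟩
  · -- associativity
    rintro ⟨x1, u⟩ ⟨y1, v⟩ ⟨z1, w⟩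
    simp only [gmul, ← hmdef, Prod.mk.injEq]
    rw [Ssum u v, Ssum v w]
    rw [Ssum (m x1 * v + m y1 * u) w, Ssum u (m y1 * w + m z1 * v)]
    constructor
    · rw [add_mul, key u v z1, key0 (m x1 * v + m y1 * u) w, key0 u (m y1 * w + m z1 * v),
        mul_add x1, keyL v w x1]
      rw [add_assoc, add_assoc, ← mul_add C, ← mul_add C,
        ← TensorProduct.tmul_add, ← TensorProduct.tmul_add, mul_assoc x1 y1 z1]
      congr 2
      ring
    · simp only [map_add, hmmul, hm]
      ring
  · -- unit
    intro x
    constructor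
    · simp only [gmul, ← hmdef]
      simp [hm1]
    · simp only [gmul, ← hmdef]
      simp [hm1]
  · intro x y z
    simp only [gmul, ← hmdef, Prod.fst_add, Prod.snd_add, Prod.mk_add_mk, Prod.mk.injEq]
    constructor
    · simp only [mul_add, TensorProduct.tmul_add, Finset.sum_add_distrib]
      ring
    · simp only [map_add]
      ring
  · intro x y z
    simp only [gmul, ← hmdef, Prod.fst_add, Prod.snd_add, Prod.mk_add_mk, Prod.mk.injEq]
    constructor
    · simp only [mul_add, add_mul, TensorProduct.add_tmul, Finset.sum_add_distrib]
      ring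
    · simp only [map_add]
      ring
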